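/- The exponential generating function C_1(z) of compacted binary trees of right height at most 1 satisfies (1−2z) C_1''(z) − (3−z) C_1'(z) = 0 with C_1(0) = 1, C_1'(0) = 1; consequently C_1'(z) = e^{z/2} / (1−2z)^{5/4}. -/

import Mathlib

open Real Set

/-- The EGF `C₁` of compacted binary trees of right height at most 1 satisfies
`(1-2z)C₁'' - (3-z)C₁' = 0`, `C₁(0)=1`, `C₁'(0)=1`; consequently
`C₁'(z) = e^{z/2}/(1-2z)^{5/4}`. -/
theorem stmt_14 (f : ℝ → ℝ)
    (hf : ∀ z ∈ Ioo (-(1 : ℝ) / 2) (1 / 2), DifferentiableAt ℝ f z)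
    (hf' : ∀ z ∈ Ioo (-(1 : ℝ) / 2) (1 / 2), DifferentiableAt ℝ (deriv f) z)
    (hode : ∀ z ∈ Ioo (-(1 : ℝ) / 2) (1 / 2),
      (1 - 2 * z) * deriv (deriv f) z - (3 - z) * deriv f z = 0)
    (h0 : f 0 = 1) (h0' : deriv f 0 = 1) :
    ∀ z ∈ Ioo (-(1 : ℝ) / 2) (1 / 2),
      deriv f z = Real.exp (z / 2) / (1 - 2 * z) ^ ((5 : ℝ) / 4) := by
  set s : Set ℝ := Ioo (-(1 : ℝ) / 2) (1 / 2) with hs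
  set g : ℝ → ℝ := fun z => deriv f z * (Real.exp (-z / 2) * (1 - 2 * z) ^ ((5 : ℝ) / 4))
    with hg
  have hcvx : Convex ℝ s := convex_Ioo _ _
  have h0s : (0 : ℝ) ∈ s := by constructor <;> norm_num
  -- g has derivative 0 at every point of s
  have key : ∀ z ∈ s, HasDerivAt g 0 z := by
    intro z hz
    have hzpos : 0 < 1 - 2 * z := by
      have := hz.2
      simp only [hs, mem_Ioo] at hz
      linarith [hz.2]
    have h1 : HasDerivAt (deriv f) (deriv (deriv f) z) z := (hf' z hz).hasDerivAt
    have h2 : HasDerivAt (fun z : ℝ => Real.exp (-z / 2))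
        (Real.exp (-z / 2) * (-1 / 2)) z := by
      have : HasDerivAt (fun z : ℝ => -z / 2) (-1 / 2) z := by
        simpa using ((hasDerivAt_id z).neg.div_const 2)
      simpa using this.exp
    have h3 : HasDerivAt (fun z : ℝ => (1 - 2 * z) ^ ((5 : ℝ) / 4))
        ((5 : ℝ) / 4 * (1 - 2 * z) ^ ((1 : ℝ) / 4) * (-2)) z := by
      have hb : HasDerivAt (fun z : ℝ => 1 - 2 * z) (-2) z := by
        simpa using ((hasDerivAt_id z).const_mul 2).const_sub 1
      have := (Real.hasDerivAt_rpow_const (p := (5 : ℝ) / 4)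
        (Or.inl hzpos.ne')).comp z hb
      rw [show (5 : ℝ) / 4 - 1 = 1 / 4 by norm_num] at this
      exact this
    have h4 := (h1.mul (h2.mul h3))
    have hode' := hode z hz
    have hsplit : (1 - 2 * z) ^ ((5 : ℝ) / 4)
        = (1 - 2 * z) * (1 - 2 * z) ^ ((1 : ℝ) / 4) := by
      rw [show (5 : ℝ) / 4 = 1 + 1 / 4 by norm_num, Real.rpow_add hzpos,
        Real.rpow_one]
    have hzero : deriv (deriv f) z * (Real.exp (-z / 2) * (1 - 2 * z) ^ ((5 : ℝ) / 4))
        + deriv f z * (Real.exp (-z / 2) * (-1 / 2) * (1 - 2 * z) ^ ((5 : ℝ) / 4)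
          + Real.exp (-z / 2) * ((5 : ℝ) / 4 * (1 - 2 * z) ^ ((1 : ℝ) / 4) * (-2))) = 0 := by
      rw [hsplit]
      have hff : (1 - 2 * z) * deriv (deriv f) z = (3 - z) * deriv f z := by
        linarith [hode']
      linear_combination (Real.exp (-z / 2) * (1 - 2 * z) ^ ((1 : ℝ) / 4)) * hff
    have h4' := h4
    exact h4'.congr_deriv hzero
  -- hence g is constant on s, equal to g 0 = 1
  have hconst : ∀ z ∈ s, g z = 1 := by
    intro z hz
    have hdiff : DifferentiableOn ℝ g s := fun x hx =>
      ((key x hx).differentiableAt).differentiableWithinAt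
    have hopen : IsOpen s := isOpen_Ioo
    have hfd : ∀ x ∈ s, fderivWithin ℝ g s x = 0 := by
      intro x hx
      rw [fderivWithin_of_isOpen hopen hx]
      have := (key x hx).hasFDerivAt.fderiv
      rw [this]
      ext y
      simp
    have := hcvx.is_const_of_fderivWithin_eq_zero hdiff hfd hz h0s
    rw [this]
    simp [hg, h0']
  intro z hz
  have hzpos : 0 < 1 - 2 * z := by
    simp only [hs, mem_Ioo] at hz
    linarith [hz.2]
  have := hconst z hz
  simp only [hg] at this
  have hE : Real.exp (-z / 2) = (Real.exp (z / 2))⁻¹ := by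
    rw [← Real.exp_neg]; ring_nf
  rw [hE] at this
  have hP : (0 : ℝ) < (1 - 2 * z) ^ ((5 : ℝ) / 4) := Real.rpow_pos_of_pos hzpos _
  field_simp at this ⊢
  rw [eq_div_iff (Real.rpow_pos_of_pos (by linarith) _).ne']
  linarith [this]
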